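/- For any two subspaces X and Y of F_q^n (not necessarily of the same dimension), the subspace distance is at least the Hamming distance between their identifying vectors: d_S(X,Y) ≥ d_H(v(X), v(Y)). -/

import Mathlib

/-- `M` is in reduced row echelon form with pivot (leading-one) column of row `i`
given by `piv i`: pivots strictly move right, each leading coefficient is `1`,
it is the first nonzero entry of its row, and it is the only nonzero entry of
its column. -/
def IsRREFWithPivots {F : Type*} [Field F] {k n : ℕ}
    (M : Matrix (Fin k) (Fin n) F) (piv : Fin k → Fin n) : Prop :=
  StrictMono piv ∧
  (∀ i, M i (piv i) = 1) ∧
  (∀ (i : Fin k) (j : Fin n), j < piv i → M i j = 0) ∧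
  (∀ i i' : Fin k, i' ≠ i → M i' (piv i) = 0)

/-- `M` is in reduced row echelon form. -/
def IsRREF {F : Type*} [Field F] {k n : ℕ} (M : Matrix (Fin k) (Fin n) F) : Prop :=
  ∃ piv, IsRREFWithPivots M piv

/-- The identifying (binary) vector associated with pivot columns `piv`:
its ones are exactly in the pivot positions. -/
def idVec {k n : ℕ} (piv : Fin k → Fin n) : Fin n → Bool :=
  fun j => decide (∃ i, piv i = j)

/-- The subspace distance `d_S(X,Y) = dim X + dim Y - 2 dim (X ⊓ Y)`. -/
noncomputable def subDist {F : Type*} [Field F] {n : ℕ} (X Y : Submodule F (Fin n → F)) : ℕ :=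
  Module.finrank F X + Module.finrank F Y - 2 * Module.finrank F ↥(X ⊓ Y)

/-- **Corollary 2 of the paper.** For any two subspaces
`X, Y ⊆ F_q^n` (not necessarily of the same dimension),
`d_S(X,Y) ≥ d_H(v(X), v(Y))`. -/
lemma RREF.linearIndependent {F : Type*} [Field F] {k n : ℕ} {M : Matrix (Fin k) (Fin n) F}
    {piv : Fin k → Fin n} (hM : IsRREFWithPivots M piv) :
    LinearIndependent F M := by
  obtain ⟨hmono, h1, hlt, hcol⟩ := hM
  change LinearIndependent F (fun i => M i)
  rw [Fintype.linearIndependent_iff]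
  intro c hc i
  have := congrFun hc (piv i)
  simp only [Finset.sum_apply, Pi.smul_apply, smul_eq_mul, Pi.zero_apply] at this
  rwa [Finset.sum_eq_single i (fun i' _ hne => by rw [hcol i i' hne, mul_zero])
    (fun h => absurd (Finset.mem_univ i) h), h1 i, mul_one] at this

lemma RREF.lead_mem {F : Type*} [Field F] {k n : ℕ} {M : Matrix (Fin k) (Fin n) F}
    {piv : Fin k → Fin n} (hM : IsRREFWithPivots M piv)
    {v : Fin n → F} (hv : v ∈ Submodule.span F (Set.range M))
    {j : Fin n} (hj : v j ≠ 0) (hlead : ∀ j' < j, v j' = 0) :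
    ∃ i, piv i = j := by
  obtain ⟨hmono, h1, hlt, hcol⟩ := hM
  change v ∈ Submodule.span F (Set.range (fun i => M i)) at hv
  rw [Submodule.mem_span_range_iff_exists_fun] at hv
  obtain ⟨c, hc⟩ := hv
  classical
  set s : Finset (Fin k) := Finset.univ.filter (fun i => c i ≠ 0) with hs
  have hsne : s.Nonempty := by
    by_contra h
    rw [Finset.not_nonempty_iff_eq_empty] at h
    apply hj
    rw [← hc]
    simp only [Finset.sum_apply, Pi.smul_apply, smul_eq_mul]
    apply Finset.sum_eq_zero
    intro i _
    have : c i = 0 := by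
      by_contra hci
      have : i ∈ s := by simp [hs, hci]
      simp [h] at this
    rw [this, zero_mul]
  set i0 := s.min' hsne with hi0
  have hci0 : c i0 ≠ 0 := by
    have := s.min'_mem hsne
    simp [hs] at this; exact this
  have hvp : v (piv i0) = c i0 := by
    rw [← hc]
    simp only [Finset.sum_apply, Pi.smul_apply, smul_eq_mul]
    rw [Finset.sum_eq_single i0 (fun i' _ hne => by rw [hcol i0 i' hne, mul_zero])
      (fun h => absurd (Finset.mem_univ i0) h), h1 i0, mul_one]
  have hvz : ∀ j' < piv i0, v j' = 0 := by
    intro j' hj'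
    rw [← hc]
    simp only [Finset.sum_apply, Pi.smul_apply, smul_eq_mul]
    apply Finset.sum_eq_zero
    intro i _
    by_cases hci : c i = 0
    · rw [hci, zero_mul]
    · have hi : i ∈ s := by simp [hs, hci]
      have h1' : i0 ≤ i := s.min'_le i hi
      have h2' : piv i0 ≤ piv i := hmono.monotone h1'
      rw [hlt i j' (lt_of_lt_of_le hj' h2'), mul_zero]
  refine ⟨i0, ?_⟩
  rcases lt_trichotomy (piv i0) j with h | h | h
  · exact absurd (hlead _ h) (hvp ▸ hci0)
  · exact h
  · exact absurd (hvz j h) hj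

set_option maxHeartbeats 1000000 in
theorem hamming_le_subDist {F : Type*} [Field F] [Fintype F] {n k1 k2 : ℕ}
    (X Y : Submodule F (Fin n → F))
    (MX : Matrix (Fin k1) (Fin n) F) (pivX : Fin k1 → Fin n)
    (hMX : IsRREFWithPivots MX pivX)
    (hsX : Submodule.span F (Set.range MX) = X)
    (MY : Matrix (Fin k2) (Fin n) F) (pivY : Fin k2 → Fin n)
    (hMY : IsRREFWithPivots MY pivY)
    (hsY : Submodule.span F (Set.range MY) = Y) :
    hammingDist (idVec pivX) (idVec pivY) ≤ subDist X Y := by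
  classical
  set P : Finset (Fin n) := Finset.univ.image pivX with hP
  set Q : Finset (Fin n) := Finset.univ.image pivY with hQ
  -- dimensions
  have hdX : Module.finrank F X = k1 := by
    have hli := RREF.linearIndependent hMX
    rw [← hsX, finrank_span_eq_card hli, Fintype.card_fin]
  have hdY : Module.finrank F Y = k2 := by
    have hli := RREF.linearIndependent hMY
    rw [← hsY, finrank_span_eq_card hli, Fintype.card_fin]
  have hPcard : P.card = k1 := by
    rw [hP, Finset.card_image_of_injective _ hMX.1.injective, Finset.card_univ, Fintype.card_fin]
  have hQcard : Q.card = k2 := by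
    rw [hQ, Finset.card_image_of_injective _ hMY.1.injective, Finset.card_univ, Fintype.card_fin]
  -- dim (X ⊓ Y) ≤ (P ∩ Q).card
  have hinter : Module.finrank F ↥(X ⊓ Y) ≤ (P ∩ Q).card := by
    set S : Finset (Fin n) := P ∩ Q with hS
    let φ : ↥(X ⊓ Y) →ₗ[F] (↥S → F) :=
      (LinearMap.funLeft F F (fun j : ↥S => (j : Fin n))).comp (X ⊓ Y).subtype
    have hφ : Function.Injective φ := by
      rw [injective_iff_map_eq_zero]
      intro w hw
      ext1
      by_contra hw0
      have hne : w.1 ≠ 0 := fun h => hw0 (by simp [h])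
      -- find lead position of w.1
      set T : Finset (Fin n) := Finset.univ.filter (fun j => w.1 j ≠ 0) with hT
      have hTne : T.Nonempty := by
        by_contra h
        rw [Finset.not_nonempty_iff_eq_empty] at h
        apply hne
        funext j
        simp only [Pi.zero_apply]
        by_contra hj
        have : j ∈ T := by simp [hT, hj]
        simp [h] at this
      set j0 := T.min' hTne with hj0
      have hj0ne : w.1 j0 ≠ 0 := by
        have := T.min'_mem hTne; simp [hT] at this; exact this
      have hj0lead : ∀ j' < j0, w.1 j' = 0 := by
        intro j' hj'
        by_contra hj'ne
        have : j' ∈ T := by simp [hT, hj'ne]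
        exact absurd (T.min'_le j' this) (not_le.mpr hj')
      have hwX : w.1 ∈ Submodule.span F (Set.range MX) := hsX ▸ w.2.1
      have hwY : w.1 ∈ Submodule.span F (Set.range MY) := hsY ▸ w.2.2
      obtain ⟨i1, hi1⟩ := RREF.lead_mem hMX hwX hj0ne hj0lead
      obtain ⟨i2, hi2⟩ := RREF.lead_mem hMY hwY hj0ne hj0lead
      have hj0S : j0 ∈ S := by
        rw [hS, Finset.mem_inter, hP, hQ]
        exact ⟨Finset.mem_image.mpr ⟨i1, Finset.mem_univ _, hi1⟩,
               Finset.mem_image.mpr ⟨i2, Finset.mem_univ _, hi2⟩⟩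
      have := congrFun hw ⟨j0, hj0S⟩
      exact hj0ne this
    calc Module.finrank F ↥(X ⊓ Y) ≤ Module.finrank F (↥S → F) :=
          LinearMap.finrank_le_finrank_of_injective hφ
      _ = S.card := by rw [Module.finrank_pi, Fintype.card_coe]
  -- hamming distance = |P Δ Q|
  have hham : hammingDist (idVec pivX) (idVec pivY) = ((P ∪ Q) \ (P ∩ Q)).card := by
    rw [hammingDist]
    congr 1
    ext j
    simp only [Finset.mem_filter, Finset.mem_univ, true_and, Finset.mem_sdiff,
      Finset.mem_union, Finset.mem_inter, idVec, hP, hQ, ne_eq, decide_eq_decide,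
      Finset.mem_image, Finset.mem_univ, true_and]
    tauto
  have hcardeq : ((P ∪ Q) \ (P ∩ Q)).card = P.card + Q.card - 2 * (P ∩ Q).card := by
    rw [Finset.card_sdiff_of_subset (Finset.inter_subset_union), ← Finset.card_union_add_card_inter]
    omega
  have hPQle1 : (P ∩ Q).card ≤ P.card := Finset.card_le_card (Finset.inter_subset_left)
  have hPQle2 : (P ∩ Q).card ≤ Q.card := Finset.card_le_card (Finset.inter_subset_right)
  rw [hham, hcardeq, subDist, hdX, hdY, hPcard, hQcard]
  omega
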